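/- arXiv:1511.00233 — 4 statements merged into one kernel-verified Lean document; each statement's English description precedes it below -/
import Mathlib

section
/- Let v ∈ ℓ²(ℤ) (or any countable index set) and suppose its nonincreasing rearrangement (v_n^*) satisfies |v_n^*| ≤ M n^{-(1-t/d)/2} exp(-η ω^{-t/d} n^{t/d}) for all n ≥ 1, with constants M, η, ω > 0 and 0 < t ≤ d. Then for every ε ∈ (0, M] the minimal number N of terms needed so that the best N-term approximation error (ℓ²-tail of the rearrangement) is at most ε satisfies N ≤ ω (η^{-1} log(C M/ε))^{d/t} + 1 for a constant C depending only on η, t, d, ω. -/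
-- Bernoulli-type: for 1 ≤ x, 0 < s ≤ 1: s * x^(s-1) + (x-1)^s ≤ x^s
lemma aux_bern {x s : ℝ} (hx : 1 ≤ x) (hs0 : 0 < s) (hs1 : s ≤ 1) :
    s * x ^ (s - 1) + (x - 1) ^ s ≤ x ^ s := by
  have hx0 : (0:ℝ) < x := lt_of_lt_of_le one_pos hx
  have h1 : x - 1 = x * (1 + (-1/x)) := by field_simp; ring
  have h2 : (x - 1) ^ s ≤ x ^ s * (1 + s * (-1/x)) := by
    rw [h1, Real.mul_rpow hx0.le (by
      have : (1:ℝ)/x ≤ 1 := (div_le_one hx0).2 hx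
      nlinarith [this])]
    have hb : (1 + (-1/x)) ^ s ≤ 1 + s * (-1/x) := by
      apply rpow_one_add_le_one_add_mul_self _ hs0.le hs1
      have : (1:ℝ)/x ≤ 1 := (div_le_one hx0).2 hx
      rw [neg_div]; linarith
    have hxs : (0:ℝ) ≤ x ^ s := Real.rpow_nonneg hx0.le s
    nlinarith [hb]
  have h3 : x ^ s * (1 + s * (-1/x)) = x ^ s - s * x ^ (s - 1) := by
    have : x ^ (s - 1) = x ^ s / x := by
      rw [Real.rpow_sub hx0, Real.rpow_one]
    rw [this]; field_simp; ring
  linarith [h2, h3.le, h3.ge]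

set_option maxHeartbeats 1600000 in
/-- for a sequence whose nonincreasing rearrangement `v` (indexed by `n ≥ 1`)
lies in the exponential (Gevrey) sparsity class, the minimal number `N` of terms needed for
the ℓ²-tail to be at most `ε` satisfies `N ≤ ω (η⁻¹ log (C M / ε))^(d/t) + 1`. -/
theorem stmt_7 (η ω d t : ℝ) (hη : 0 < η) (hω : 0 < ω) (ht0 : 0 < t) (htd : t ≤ d) :
    ∃ C > 0, ∀ (M : ℝ) (v : ℕ → ℝ), 0 < M →
      (∀ n : ℕ, 1 ≤ n →
        |v n| ≤ M * (n : ℝ) ^ (-((1 - t / d) / 2)) *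
          Real.exp (-η * ω ^ (-(t / d)) * (n : ℝ) ^ (t / d))) →
      (∀ n : ℕ, |v (n + 1)| ≤ |v n|) →
      Summable (fun n : ℕ => (v n) ^ 2) →
      ∀ ε : ℝ, 0 < ε → ε ≤ M →
        ∃ N : ℕ,
          Real.sqrt (∑' n : ℕ, if N < n then (v n) ^ 2 else 0) ≤ ε ∧
          (N : ℝ) ≤ ω * (η⁻¹ * Real.log (C * M / ε)) ^ (d / t) + 1 := by
  have hd : 0 < d := lt_of_lt_of_le ht0 htd
  set s : ℝ := t / d with hs_def
  have hs0 : 0 < s := div_pos ht0 hd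
  have hs1 : s ≤ 1 := (div_le_one hd).2 htd
  set a : ℝ := η * ω ^ (-s) with ha_def
  have ha : 0 < a := mul_pos hη (Real.rpow_pos_of_pos hω _)
  refine ⟨max (Real.sqrt ((2*a*s)⁻¹)) 1, lt_of_lt_of_le one_pos (le_max_right _ _), ?_⟩
  set C : ℝ := max (Real.sqrt ((2*a*s)⁻¹)) 1 with hC_def
  have hC1 : (1:ℝ) ≤ C := le_max_right _ _
  have hC0 : (0:ℝ) < C := lt_of_lt_of_le one_pos hC1
  intro M v hM hv _ hsum ε hε hεM
  set L : ℝ := Real.log (C * M / ε) with hL_def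
  have hCM : 0 < C * M / ε := by positivity
  have hCM1 : (1:ℝ) ≤ C * M / ε := by
    rw [le_div_iff₀ hε]
    calc (1:ℝ) * ε = ε := one_mul ε
    _ ≤ 1 * M := by linarith
    _ ≤ C * M := by nlinarith
  have hL : 0 ≤ L := Real.log_nonneg hCM1
  set x : ℝ := ω * (η⁻¹ * L) ^ (d / t) with hx_def
  have hx : 0 ≤ x := by positivity
  refine ⟨⌈x⌉₊, ?_, ?_⟩
  swap
  · exact (Nat.ceil_lt_add_one hx).le
  set N : ℕ := ⌈x⌉₊ with hN_def
  set g : ℕ → ℝ := fun n => Real.exp (-(2*a) * (n:ℝ) ^ s) with hg_def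
  have hg_pos : ∀ n, 0 < g n := fun n => Real.exp_pos _
  set B : ℝ := M ^ 2 * (2*a*s)⁻¹ with hB_def
  have hB : 0 < B := by positivity
  -- key pointwise bound
  have key : ∀ n : ℕ, 1 ≤ n → v n ^ 2 ≤ B * (g (n-1) - g n) := by
    intro n hn
    have hn1 : (1:ℝ) ≤ (n:ℝ) := by exact_mod_cast hn
    have hn0 : (0:ℝ) < (n:ℝ) := lt_of_lt_of_le one_pos hn1
    have hcast : ((n-1 : ℕ) : ℝ) = (n:ℝ) - 1 := by
      have : (1:ℕ) ≤ n := hn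
      push_cast [this]; ring
    have hb := hv n hn
    have hrhs0 : 0 ≤ M * (n : ℝ) ^ (-((1 - t / d) / 2)) *
          Real.exp (-η * ω ^ (-(t / d)) * (n : ℝ) ^ (t / d)) := by positivity
    have hsq : v n ^ 2 ≤ M ^ 2 * (n:ℝ) ^ (s - 1) * Real.exp (-(2*a) * (n:ℝ) ^ s) := by
      have h1 : v n ^ 2 = |v n| ^ 2 := (sq_abs _).symm
      have h2 : |v n| ^ 2 ≤ (M * (n : ℝ) ^ (-((1 - t / d) / 2)) *
          Real.exp (-η * ω ^ (-(t / d)) * (n : ℝ) ^ (t / d))) ^ 2 := by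
        apply sq_le_sq' _ hb
        have := abs_nonneg (v n)
        linarith
      have h3 : (M * (n : ℝ) ^ (-((1 - t / d) / 2)) *
          Real.exp (-η * ω ^ (-(t / d)) * (n : ℝ) ^ (t / d))) ^ 2
          = M ^ 2 * (n:ℝ) ^ (s - 1) * Real.exp (-(2*a) * (n:ℝ) ^ s) := by
        rw [mul_pow, mul_pow, ← Real.rpow_natCast ((n:ℝ) ^ (-((1 - t / d) / 2))) 2,
          ← Real.rpow_mul hn0.le, ← Real.exp_nat_mul]
        push_cast
        rw [show (-((1 - t / d) / 2)) * 2 = s - 1 by rw [hs_def]; ring]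
        congr 1
        rw [ha_def, hs_def]; ring
      rw [h1]; rw [h3] at h2; exact h2
    -- telescoping bound
    have hbern : s * (n:ℝ) ^ (s-1) ≤ (n:ℝ) ^ s - ((n:ℝ) - 1) ^ s := by
      have := aux_bern hn1 hs0 hs1
      linarith
    have hexp : Real.exp (2*a*((n:ℝ)^s - ((n:ℝ)-1)^s)) ≥ 1 + 2*a*((n:ℝ)^s - ((n:ℝ)-1)^s) :=
      Real.add_one_le_exp _ |>.trans_eq' (by ring)
    have htel : 2*a*s * (n:ℝ)^(s-1) * Real.exp (-(2*a) * (n:ℝ)^s) ≤ g (n-1) - g n := by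
      have hgn1 : g (n-1) = Real.exp (2*a*((n:ℝ)^s - ((n:ℝ)-1)^s)) * Real.exp (-(2*a) * (n:ℝ)^s) := by
        simp only [hg_def]; rw [← Real.exp_add, hcast]; congr 1; ring
      have hE : 0 < Real.exp (-(2*a) * (n:ℝ)^s) := Real.exp_pos _
      rw [hgn1]; simp only [hg_def]
      have h4 : (1 + 2*a*((n:ℝ)^s - ((n:ℝ)-1)^s)) * Real.exp (-(2*a) * (n:ℝ)^s)
          ≤ Real.exp (2*a*((n:ℝ)^s - ((n:ℝ)-1)^s)) * Real.exp (-(2*a) * (n:ℝ)^s) := by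
        apply mul_le_mul_of_nonneg_right hexp hE.le
      have h5 : 2*a*s * (n:ℝ)^(s-1) * Real.exp (-(2*a) * (n:ℝ)^s)
          ≤ (2*a*((n:ℝ)^s - ((n:ℝ)-1)^s)) * Real.exp (-(2*a) * (n:ℝ)^s) := by
        apply mul_le_mul_of_nonneg_right _ hE.le
        nlinarith [hbern, ha]
      linarith [h4, h5]
    calc v n ^ 2 ≤ M ^ 2 * (n:ℝ) ^ (s - 1) * Real.exp (-(2*a) * (n:ℝ) ^ s) := hsq
      _ = B * (2*a*s * (n:ℝ)^(s-1) * Real.exp (-(2*a) * (n:ℝ)^s)) := by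
          rw [hB_def]; field_simp
      _ ≤ B * (g (n-1) - g n) := by
          apply mul_le_mul_of_nonneg_left htel hB.le
  -- finite partial sums
  set f : ℕ → ℝ := fun n => if N < n then v n ^ 2 else 0 with hf_def
  have hf_nonneg : ∀ n, 0 ≤ f n := by
    intro n; rw [hf_def]; dsimp only; split <;> positivity
  have hf_le : ∀ n, f n ≤ v n ^ 2 := by
    intro n; rw [hf_def]; dsimp only; split
    · exact le_rfl
    · positivity
  have hf_sum : Summable f := Summable.of_nonneg_of_le hf_nonneg hf_le hsum
  have hpartial : ∀ k : ℕ, ∑ i ∈ Finset.range (N+1+k), f i ≤ B * (g N - g (N+k)) := by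
    intro k
    induction k with
    | zero =>
      have : ∑ i ∈ Finset.range (N+1+0), f i = 0 := by
        apply Finset.sum_eq_zero
        intro i hi
        rw [Finset.mem_range] at hi
        rw [hf_def]; dsimp only
        rw [if_neg (by omega)]
      rw [this]; simp
    | succ k ih =>
      have hstep : ∑ i ∈ Finset.range (N+1+(k+1)), f i
          = ∑ i ∈ Finset.range (N+1+k), f i + f (N+1+k) := by
        rw [show N+1+(k+1) = (N+1+k)+1 by ring, Finset.sum_range_succ]
      rw [hstep]
      have hfval : f (N+1+k) = v (N+1+k) ^ 2 := by
        rw [hf_def]; dsimp only; rw [if_pos (by omega)]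
      have hkey := key (N+1+k) (by omega)
      have : (N+1+k) - 1 = N + k := by omega
      rw [this] at hkey
      rw [hfval]
      have : N + (k+1) = N+1+k := by ring
      rw [this]
      linarith
  have htsum : ∑' n : ℕ, f n ≤ B * g N := by
    apply Summable.tsum_le_of_sum_le hf_sum
    intro F
    obtain ⟨m, hm⟩ := F.exists_nat_subset_range
    have hsub : F ⊆ Finset.range (N+1+m) := hm.trans (Finset.range_subset_range.2 (by omega))
    calc ∑ i ∈ F, f i ≤ ∑ i ∈ Finset.range (N+1+m), f i :=
          Finset.sum_le_sum_of_subset_of_nonneg hsub (fun i _ _ => hf_nonneg i)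
      _ ≤ B * (g N - g (N+m)) := hpartial m
      _ ≤ B * g N := by nlinarith [hg_pos (N+m), hB]
  -- sqrt bound
  set q : ℝ := M * Real.sqrt ((2*a*s)⁻¹) * Real.exp (-a * (N:ℝ)^s) with hq_def
  have hq0 : 0 ≤ q := by positivity
  have hBg : B * g N = q ^ 2 := by
    simp only [hq_def, hg_def, hB_def]
    rw [mul_pow, mul_pow, Real.sq_sqrt (by positivity), ← Real.exp_nat_mul]
    push_cast
    congr 2
    ring
  have hsqrt1 : Real.sqrt (∑' n : ℕ, f n) ≤ q := by
    calc Real.sqrt (∑' n : ℕ, f n) ≤ Real.sqrt (B * g N) := Real.sqrt_le_sqrt htsum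
      _ = q := by rw [hBg, Real.sqrt_sq hq0]
  -- now bound q ≤ ε
  have haxs : a * x ^ s = L := by
    rw [hx_def]
    rw [Real.mul_rpow hω.le (by positivity), ← Real.rpow_mul (by positivity),
      show d / t * s = 1 by rw [hs_def]; field_simp, Real.rpow_one, ha_def]
    rw [show η * ω ^ (-s) * (ω ^ s * (η⁻¹ * L)) = (ω ^ (-s) * ω ^ s) * (η * η⁻¹) * L by ring,
      ← Real.rpow_add hω, neg_add_cancel, Real.rpow_zero, mul_inv_cancel₀ hη.ne', one_mul, one_mul]
  have hNx : x ≤ (N:ℝ) := Nat.le_ceil x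
  have hNs : a * (N:ℝ) ^ s ≥ L := by
    rw [← haxs]
    apply mul_le_mul_of_nonneg_left (Real.rpow_le_rpow hx hNx hs0.le) ha.le
  have hexpN : Real.exp (-a * (N:ℝ)^s) ≤ ε / (C * M) := by
    have h1 : Real.exp (-a * (N:ℝ)^s) ≤ Real.exp (-L) := by
      apply Real.exp_le_exp.2; linarith
    have h2 : Real.exp (-L) = ε / (C * M) := by
      rw [Real.exp_neg, hL_def, Real.exp_log hCM, inv_div]
    linarith
  have hqε : q ≤ ε := by
    have hsC : Real.sqrt ((2*a*s)⁻¹) ≤ C := le_max_left _ _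
    calc q ≤ M * C * Real.exp (-a * (N:ℝ)^s) := by
          rw [hq_def]
          apply mul_le_mul_of_nonneg_right _ (Real.exp_pos _).le
          exact mul_le_mul_of_nonneg_left hsC hM.le
      _ ≤ M * C * (ε / (C * M)) := by
          apply mul_le_mul_of_nonneg_left hexpN (by positivity)
      _ = ε := by field_simp
  exact hsqrt1.trans hqε
end

section
/- Let r ∈ ℓ²(K) with r ≠ 0 and θ ∈ (0,1). Let Λ' be a finite subset of K obtained greedily (picking indices of largest modulus) of minimal cardinality such that Σ_{k∈Λ'} |r_k|² ≥ θ² Σ_{k∈K} |r_k|². Then ‖r - P_{Λ'} r‖ ≤ sqrt(1-θ²) ‖r‖, and moreover Λ' achieves the minimal cardinality among all subsets satisfying the Dörfler property. -/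
/-- Dörfler marking by a greedy choice of minimal cardinality.
`Λ'` contains the largest entries of `r`, captures a `θ²` fraction of the total
`ℓ²`-mass, and no proper subset does.  Then the tail satisfies
`‖r - P_{Λ'} r‖ ≤ sqrt(1-θ²) ‖r‖`, and `Λ'` has minimal cardinality among all
subsets with the Dörfler property. -/
theorem stmt_10 {K : Type*} [DecidableEq K] (r : K → ℝ) (θ : ℝ)
    (hθ0 : 0 < θ) (hθ1 : θ < 1)
    (hsum : Summable (fun k => (r k) ^ 2))
    (hne : ∃ k, r k ≠ 0)
    (Λ' : Finset K)
    (hgreedy : ∀ k ∈ Λ', ∀ m ∉ Λ', (r m) ^ 2 ≤ (r k) ^ 2)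
    (hdorfler : θ ^ 2 * ∑' k, (r k) ^ 2 ≤ ∑ k ∈ Λ', (r k) ^ 2)
    (hminimal : ∀ Λ'' ⊂ Λ', ∑ k ∈ Λ'', (r k) ^ 2 < θ ^ 2 * ∑' k, (r k) ^ 2) :
    Real.sqrt (∑' k, if k ∈ Λ' then 0 else (r k) ^ 2) ≤
        Real.sqrt (1 - θ ^ 2) * Real.sqrt (∑' k, (r k) ^ 2) ∧
      ∀ Λ'' : Finset K, θ ^ 2 * ∑' k, (r k) ^ 2 ≤ ∑ k ∈ Λ'', (r k) ^ 2 →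
        Λ'.card ≤ Λ''.card := by
  have hS : 0 ≤ ∑' k, (r k) ^ 2 := tsum_nonneg fun k => sq_nonneg _
  constructor
  · have h2 := Summable.sum_add_tsum_compl (s := Λ') hsum
    have h3 : (∑' k, if k ∈ Λ' then 0 else (r k) ^ 2)
        = ∑' (k : ((Λ' : Set K)ᶜ : Set K)), (r k) ^ 2 := by
      rw [tsum_subtype ((Λ' : Set K)ᶜ) (fun k => r k ^ 2)]
      apply tsum_congr
      intro k
      by_cases hk : k ∈ Λ' <;> simp [Set.indicator, hk]
    have h1 : (∑' k, if k ∈ Λ' then 0 else (r k) ^ 2)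
        = (∑' k, (r k) ^ 2) - ∑ k ∈ Λ', (r k) ^ 2 := by
      rw [h3]; linarith
    rw [h1]
    have hle : (∑' k, (r k) ^ 2) - ∑ k ∈ Λ', (r k) ^ 2
        ≤ (1 - θ ^ 2) * ∑' k, (r k) ^ 2 := by nlinarith
    calc Real.sqrt ((∑' k, (r k) ^ 2) - ∑ k ∈ Λ', (r k) ^ 2)
        ≤ Real.sqrt ((1 - θ ^ 2) * ∑' k, (r k) ^ 2) := Real.sqrt_le_sqrt hle
      _ = Real.sqrt (1 - θ ^ 2) * Real.sqrt (∑' k, (r k) ^ 2) :=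
          Real.sqrt_mul (by nlinarith) _
  · intro Λ'' hΛ''
    by_contra hcard
    push_neg at hcard
    by_cases hA : Λ'' \ Λ' = ∅
    · have hsub : Λ'' ⊆ Λ' := Finset.sdiff_eq_empty_iff_subset.mp hA
      have hss : Λ'' ⊂ Λ' := Finset.ssubset_iff_subset_ne.mpr
        ⟨hsub, fun he => by simp [he] at hcard⟩
      exact absurd hΛ'' (not_le.mpr (hminimal Λ'' hss))
    · -- A nonempty
      have hcardA : (Λ'' \ Λ').card ≤ (Λ' \ Λ'').card := by
        have h1 := Finset.card_inter_add_card_sdiff Λ'' Λ'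
        have h2 := Finset.card_inter_add_card_sdiff Λ' Λ''
        have h3 : (Λ'' ∩ Λ').card = (Λ' ∩ Λ'').card := by rw [Finset.inter_comm]
        omega
      obtain ⟨B, hBsub, hBcard⟩ := Finset.exists_subset_card_eq hcardA
      have hBne : B.Nonempty := by
        rw [← Finset.card_pos, hBcard, Finset.card_pos]
        exact Finset.nonempty_iff_ne_empty.mpr hA
      obtain ⟨b0, hb0B, hmin⟩ := B.exists_min_image (fun k => (r k) ^ 2) hBne
      have hb0Λ' : b0 ∈ Λ' := (Finset.mem_sdiff.mp (hBsub hb0B)).1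
      have hsumA : ∑ k ∈ Λ'' \ Λ', (r k) ^ 2 ≤ ∑ k ∈ B, (r k) ^ 2 := by
        calc ∑ k ∈ Λ'' \ Λ', (r k) ^ 2
            ≤ (Λ'' \ Λ').card • (r b0) ^ 2 := Finset.sum_le_card_nsmul _ _ _
              (fun a ha => hgreedy b0 hb0Λ' a (Finset.mem_sdiff.mp ha).2)
          _ = B.card • (r b0) ^ 2 := by rw [hBcard]
          _ ≤ ∑ k ∈ B, (r k) ^ 2 := Finset.card_nsmul_le_sum _ _ _ hmin
      set Λ₀ := (Λ'' ∩ Λ') ∪ B with hΛ₀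
      have hdisj : Disjoint (Λ'' ∩ Λ') B := by
        refine Finset.disjoint_left.mpr fun a ha haB => ?_
        exact (Finset.mem_sdiff.mp (hBsub haB)).2 (Finset.mem_inter.mp ha).1
      have hΛ₀sub : Λ₀ ⊆ Λ' := Finset.union_subset
        (Finset.inter_subset_right) (hBsub.trans (Finset.sdiff_subset))
      have hΛ₀card : Λ₀.card = Λ''.card := by
        rw [hΛ₀, Finset.card_union_of_disjoint hdisj, hBcard]
        exact Finset.card_inter_add_card_sdiff Λ'' Λ'
      have hss : Λ₀ ⊂ Λ' := Finset.ssubset_iff_subset_ne.mpr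
        ⟨hΛ₀sub, fun he => by rw [he] at hΛ₀card; omega⟩
      have hsum₀ : ∑ k ∈ Λ'', (r k) ^ 2 ≤ ∑ k ∈ Λ₀, (r k) ^ 2 := by
        rw [hΛ₀, Finset.sum_union hdisj, ← Finset.sum_inter_add_sum_sdiff Λ'' Λ' (fun k => (r k) ^ 2)]
        linarith
      have := hminimal Λ₀ hss
      linarith
end

section
/- Let r ∈ ℓ²(K), θ ∈ (0,1), and let Λ' ⊆ K satisfy ‖r - P_{Λ'} r‖ ≤ sqrt(1-θ²)‖r‖ with |Λ'| minimal among all sets with this Dörfler property. If r belongs to the exponential class with ‖r‖_{ℓ_G^{η,t}} ≤ M (i.e., E_N^*(r) ≤ M exp(-η ω^{-t/d} N^{t/d})), then |Λ'| ≤ ω ((1/η) log(M/(sqrt(1-θ²)‖r‖)))^{d/t} + 1. -/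
/-- cardinality bound for Dörfler marking of a residual in the exponential
class.  `Es N` denotes the best `N`-term approximation error of `r`, `R = ‖r‖ > 0`, and
`n = |Λ'|` is minimal with `E^*_{n}(r) ≤ sqrt(1-θ²) R`, so that `E^*_{n-1}(r)` exceeds
`sqrt(1-θ²) R`.  Then `n ≤ ω ((1/η) log(M / (sqrt(1-θ²) R)))^{d/t} + 1`. -/
theorem stmt_11 (Es : ℕ → ℝ) (R M η ω d t θ : ℝ) (n : ℕ)
    (hη : 0 < η) (hω : 0 < ω) (ht0 : 0 < t) (htd : t ≤ d)
    (hM : 0 < M) (hR : 0 < R) (hθ0 : 0 < θ) (hθ1 : θ < 1)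
    (hclass : ∀ N : ℕ, Es N ≤ M * Real.exp (-η * ω ^ (-(t / d)) * (N : ℝ) ^ (t / d)))
    (hn : 1 ≤ n)
    (hach : Es n ≤ Real.sqrt (1 - θ ^ 2) * R)
    (hmin : Real.sqrt (1 - θ ^ 2) * R < Es (n - 1)) :
    (n : ℝ) ≤ ω * ((1 / η) * Real.log (M / (Real.sqrt (1 - θ ^ 2) * R))) ^ (d / t) + 1 := by
  set s := Real.sqrt (1 - θ ^ 2) * R with hs
  have h1θ : 0 < 1 - θ ^ 2 := by nlinarith
  have hs0 : 0 < s := mul_pos (Real.sqrt_pos.mpr h1θ) hR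
  have hd0 : 0 < d := lt_of_lt_of_le ht0 htd
  set N : ℝ := ((n - 1 : ℕ) : ℝ) with hN
  have hN0 : 0 ≤ N := Nat.cast_nonneg _
  have hωp : (0:ℝ) < ω ^ (-(t / d)) := Real.rpow_pos_of_pos hω _
  have hNp : (0:ℝ) ≤ N ^ (t / d) := Real.rpow_nonneg hN0 _
  have hlt : s < M * Real.exp (-η * ω ^ (-(t / d)) * N ^ (t / d)) :=
    lt_of_lt_of_le hmin (hclass (n - 1))
  have hlog : η * ω ^ (-(t / d)) * N ^ (t / d) < Real.log (M / s) := by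
    have h1 : s / M < Real.exp (-η * ω ^ (-(t / d)) * N ^ (t / d)) :=
      (div_lt_iff₀ hM).mpr (by linarith [hlt])
    have h2 := (Real.log_lt_iff_lt_exp (div_pos hs0 hM)).mpr h1
    rw [Real.log_div (ne_of_gt hs0) (ne_of_gt hM)] at h2
    rw [Real.log_div (ne_of_gt hM) (ne_of_gt hs0)]
    linarith
  have hlogpos : 0 < Real.log (M / s) :=
    lt_of_le_of_lt (by positivity) hlog
  set X : ℝ := (1 / η) * Real.log (M / s) with hX
  have hXpos : 0 < X := mul_pos (by positivity) hlogpos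
  have hωω : ω ^ (t / d) * ω ^ (-(t / d)) = 1 := by
    rw [← Real.rpow_add hω]; simp
  have hkey : N ^ (t / d) < ω ^ (t / d) * X := by
    have hid : N ^ (t / d)
        = (ω ^ (t / d) * (1 / η)) * (η * ω ^ (-(t / d)) * N ^ (t / d)) := by
      have h4 : (ω ^ (t / d) * (1 / η)) * (η * ω ^ (-(t / d)) * N ^ (t / d))
          = (ω ^ (t / d) * ω ^ (-(t / d))) * (((1 : ℝ) / η) * η) * N ^ (t / d) := by
        ring
      rw [h4, hωω, one_div, inv_mul_cancel₀ hη.ne', one_mul, one_mul]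
    calc N ^ (t / d)
        = (ω ^ (t / d) * (1 / η)) * (η * ω ^ (-(t / d)) * N ^ (t / d)) := hid
      _ < (ω ^ (t / d) * (1 / η)) * Real.log (M / s) := by
          apply mul_lt_mul_of_pos_left hlog
          positivity
      _ = ω ^ (t / d) * X := by rw [hX]; ring
  have hpow : (N ^ (t / d)) ^ (d / t) < (ω ^ (t / d) * X) ^ (d / t) :=
    Real.rpow_lt_rpow hNp hkey (div_pos hd0 ht0)
  have htdc : (t / d) * (d / t) = 1 := by
    field_simp
  have hL : (N ^ (t / d)) ^ (d / t) = N := by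
    rw [← Real.rpow_mul hN0, htdc, Real.rpow_one]
  have hRr : (ω ^ (t / d) * X) ^ (d / t) = ω * X ^ (d / t) := by
    rw [Real.mul_rpow (Real.rpow_nonneg hω.le _) hXpos.le,
      ← Real.rpow_mul hω.le, htdc, Real.rpow_one]
  rw [hL, hRr] at hpow
  have hNcast : N = (n : ℝ) - 1 := by
    rw [hN, Nat.cast_sub hn]; simp
  rw [hNcast] at hpow
  linarith
end

section
/- Let V be a Hilbert space with energy norm |||·||| satisfying sqrt(α_*)‖v‖_V ≤ |||v||| ≤ sqrt(α^*)‖v‖_V, and suppose residual norms satisfy (β_*/sqrt(α^*))‖r(u_Λ)‖_* ≤ |||u - u_Λ||| ≤ (β^*/sqrt(α_*))‖r(u_Λ)‖_* for all Galerkin solutions u_Λ. If the algorithm guarantees |||u - u_{n+1}||| ≤ 2(β^*/sqrt(α_*)) sqrt(1-θ_n²) ‖r_n‖_* and the marking parameter is chosen dynamically via sqrt(1-θ_n²) = C_0 ‖r_n‖_*/‖r_0‖_* with C_0 ≤ (1/4) sqrt(α_*/α^*)(β_*/β^*), then ‖r_{n+1}‖_*/(2‖r_0‖_*) ≤ (‖r_n‖_*/(2‖r_0‖_*))²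 for all n ≥ 0. -/
/-- quadratic convergence of the residuals of DYN-GAL.
`e n = |||u - u_n|||` and `r n = ‖r_n‖_*`; the marking parameter is chosen dynamically. -/
theorem stmt_12 (e r θ : ℕ → ℝ) (αs αb βs βb C0 : ℝ)
    (hαs : 0 < αs) (hαsb : αs ≤ αb) (hβs : 0 < βs) (hβsb : βs ≤ βb)
    (hr0 : 0 < r 0) (hrpos : ∀ n : ℕ, 0 ≤ r n)
    (hlow : ∀ n : ℕ, (βs / Real.sqrt αb) * r n ≤ e n)
    (hup : ∀ n : ℕ, e n ≤ (βb / Real.sqrt αs) * r n)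
    (halg : ∀ n : ℕ, e (n + 1) ≤ 2 * (βb / Real.sqrt αs) * Real.sqrt (1 - (θ n) ^ 2) * r n)
    (hdyn : ∀ n : ℕ, Real.sqrt (1 - (θ n) ^ 2) = C0 * r n / r 0)
    (hC0 : C0 ≤ (1 / 4) * Real.sqrt (αs / αb) * (βs / βb)) :
    ∀ n : ℕ, r (n + 1) / (2 * r 0) ≤ (r n / (2 * r 0)) ^ 2 := by
  have hsa : 0 < Real.sqrt αs := Real.sqrt_pos.mpr hαs
  have hsb : 0 < Real.sqrt αb := Real.sqrt_pos.mpr (hαs.trans_le hαsb)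
  have hsd : Real.sqrt (αs / αb) = Real.sqrt αs / Real.sqrt αb :=
    Real.sqrt_div hαs.le _
  have hβb : 0 < βb := hβs.trans_le hβsb
  rw [hsd] at hC0
  intro n
  have h1 : (βs / Real.sqrt αb) * r (n + 1) ≤
      2 * (βb / Real.sqrt αs) * (C0 * r n / r 0) * r n := by
    have := (hlow (n + 1)).trans (halg n)
    rwa [hdyn n] at this
  have key : r (n + 1) ≤ r n ^ 2 / (2 * r 0) := by
    rw [div_mul_eq_mul_div, div_le_iff₀ hsb] at h1
    have h2 : (2 * (βb / Real.sqrt αs) * (C0 * r n / r 0) * r n) * Real.sqrt αb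
        ≤ (2 * (βb / Real.sqrt αs) *
            (((1/4) * (Real.sqrt αs / Real.sqrt αb) * (βs / βb)) * r n / r 0) * r n) * Real.sqrt αb := by
      gcongr
      · exact hrpos n
      · exact hrpos n
    have h3 := h1.trans h2
    have heq : (2 * (βb / Real.sqrt αs) *
        (((1/4) * (Real.sqrt αs / Real.sqrt αb) * (βs / βb)) * r n / r 0) * r n) * Real.sqrt αb
        = βs * (r n ^ 2 / (2 * r 0)) := by
      field_simp
      ring
    rw [heq] at h3
    exact (mul_le_mul_iff_right₀ hβs).mp h3
  have key2 : r (n + 1) * (2 * r 0) ≤ r n ^ 2 := (le_div_iff₀ (by positivity)).mp key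
  rw [div_pow, div_le_div_iff₀ (by positivity) (by positivity)]
  nlinarith [key2, hr0]
end
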